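/- For every α ∈ (0,3) and every r ∈ (0,∞), the function θ2 ↦ φ_{r,α}(θ2) is strictly decreasing on (0,∞). -/

import Mathlib

open Set MeasureTheory

/-- The Bessel function of the first kind of order 0, via its power series. -/
noncomputable def J0 (x : ℝ) : ℝ :=
  ∑' k : ℕ, (-1 : ℝ) ^ k / ((Nat.factorial k : ℝ)) ^ 2 * (x / 2) ^ (2 * k)

/-- `φ_{r,α}(θ2)` of the paper. -/
noncomputable def phiRA (r α θ2 : ℝ) : ℝ :=
  2 / (θ2 ^ (1 - α) * Real.pi) *
    ∫ x in Set.Ioi (0 : ℝ),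
      (1 - Real.exp (-x ^ 2)) / x ^ (1 + 2 * α) *
        (J0 (Real.sqrt 2 * r * x / Real.sqrt θ2) - 2 * J0 (r * x / Real.sqrt θ2) + 1)

open Real intervalIntegral

lemma prod_wallis (k : ℕ) : ∏ i ∈ Finset.range k, (2*(i:ℝ)+1)/(2*i+2)
    = (Nat.factorial (2*k) : ℝ) / ((Nat.factorial k : ℝ)^2 * 4^k) := by
  induction k with
  | zero => simp
  | succ n ih =>
    rw [Finset.prod_range_succ, ih]
    have h1 : (Nat.factorial (2*(n+1)) : ℝ) = (2*n+2) * ((2*n+1) * Nat.factorial (2*n)) := by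
      have : 2*(n+1) = (2*n+1) + 1 := by ring
      rw [this, Nat.factorial_succ]
      push_cast [Nat.factorial_succ]
      ring
    have h2 : (Nat.factorial (n+1) : ℝ) = (n+1) * Nat.factorial n := by
      push_cast [Nat.factorial_succ]; ring
    have hf : (Nat.factorial n : ℝ) ≠ 0 := Nat.cast_ne_zero.mpr (Nat.factorial_ne_zero n)
    have h4 : (4:ℝ)^(n+1) = 4 * 4^n := by ring
    rw [h1, h2, h4]
    have hn : (2*(n:ℝ)+2) ≠ 0 := by positivity
    field_simp
    ring

lemma integral_cos_pow_two_pi (k : ℕ) : (∫ x in (0:ℝ)..(2*π), Real.cos x ^ (2*k))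
    = 2*π * ((Nat.factorial (2*k) : ℝ) / ((Nat.factorial k : ℝ)^2 * 4^k)) := by
  have hsplit : (∫ x in (0:ℝ)..(2*π), Real.cos x ^ (2*k))
      = (∫ x in (0:ℝ)..π, Real.cos x ^ (2*k)) + ∫ x in π..(2*π), Real.cos x ^ (2*k) := by
    rw [integral_add_adjacent_intervals] <;>
      exact (Real.continuous_cos.pow _).intervalIntegrable _ _
  have hshift : (∫ x in π..(2*π), Real.cos x ^ (2*k)) = ∫ x in (0:ℝ)..π, Real.cos x ^ (2*k) := by
    have := intervalIntegral.integral_comp_add_right (a := (0:ℝ)) (b := π)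
      (fun x => Real.cos x ^ (2*k)) π
    rw [zero_add, (by ring : π + π = 2*π)] at this
    rw [← this]
    refine intervalIntegral.integral_congr fun x _ => ?_
    rw [Real.cos_add_pi]
    rw [pow_mul, pow_mul, neg_pow, neg_one_sq, one_mul]
  have hcs : (∫ x in (0:ℝ)..π, Real.cos x ^ (2*k)) = ∫ x in (0:ℝ)..π, Real.sin x ^ (2*k) := by
    have hsplit2 : (∫ x in (0:ℝ)..π, Real.cos x ^ (2*k))
        = (∫ x in (0:ℝ)..(π/2), Real.cos x ^ (2*k)) + ∫ x in (π/2)..π, Real.cos x ^ (2*k) := by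
      rw [integral_add_adjacent_intervals] <;>
        exact (Real.continuous_cos.pow _).intervalIntegrable _ _
    have hrefl : (∫ x in (π/2)..π, Real.cos x ^ (2*k)) = ∫ x in (0:ℝ)..(π/2), Real.cos x ^ (2*k) := by
      have := intervalIntegral.integral_comp_sub_left (a := (0:ℝ)) (b := π/2)
        (fun x => Real.cos x ^ (2*k)) π
      rw [sub_zero, (by ring : π - π/2 = π/2)] at this
      rw [← this]
      refine intervalIntegral.integral_congr fun x _ => ?_
      rw [Real.cos_pi_sub]
      rw [pow_mul, pow_mul, neg_pow, neg_one_sq, one_mul]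
    rw [hsplit2, hrefl, EulerSine.integral_cos_pow_eq]
    ring
  rw [hsplit, hshift, hcs, integral_sin_pow_even, prod_wallis]
  ring


lemma summable_aux (x : ℝ) : Summable (fun k : ℕ => |x| ^ (2*k) / (Nat.factorial (2*k) : ℝ)) :=
  (Real.summable_pow_div_factorial |x|).comp_injective (fun a b h => by omega)

lemma J0_rep (x : ℝ) :
    (∫ θ in Set.Ioc (0:ℝ) (2*π), Real.cos (x * Real.cos θ)) = 2*π * J0 x := by
  set f : ℕ → ℝ → ℝ := fun k θ => (-1:ℝ)^k * (x * Real.cos θ)^(2*k) / (Nat.factorial (2*k)) with hf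
  have hcont : ∀ k, Continuous (f k) := fun k =>
    (continuous_const.mul ((continuous_const.mul Real.continuous_cos).pow _)).div_const _
  have hpt : ∀ θ, Real.cos (x * Real.cos θ) = ∑' k, f k θ := fun θ =>
    (Real.hasSum_cos (x * Real.cos θ)).tsum_eq.symm
  have hnorm : ∀ k θ, ‖f k θ‖ ≤ |x| ^ (2*k) / (Nat.factorial (2*k) : ℝ) := by
    intro k θ
    have h1 : |x * Real.cos θ| ≤ |x| := by
      rw [abs_mul]
      calc |x| * |Real.cos θ| ≤ |x| * 1 := by
            exact mul_le_mul_of_nonneg_left (Real.abs_cos_le_one θ) (abs_nonneg x)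
        _ = |x| := mul_one _
    have : ‖f k θ‖ = |x * Real.cos θ| ^ (2*k) / (Nat.factorial (2*k) : ℝ) := by
      rw [hf]
      simp only [Real.norm_eq_abs, abs_div, abs_mul, abs_pow, abs_neg, abs_one, one_pow, one_mul,
        Nat.abs_cast]
    rw [this]
    gcongr
  have h2pi : (0:ℝ) ≤ 2*π := by positivity
  have hbound : ∑' k, ∫⁻ θ in Set.Ioc (0:ℝ) (2*π), ‖f k θ‖₊ ∂volume ≠ ⊤ := by
    set M : ℕ → ℝ := fun k => |x| ^ (2*k) / (Nat.factorial (2*k) : ℝ) * (2*π) with hM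
    have hMs : Summable M := (summable_aux x).mul_right _
    have hMnn : ∀ k, 0 ≤ M k := fun k => by
      have : (0:ℝ) < Nat.factorial (2*k) := by positivity
      positivity
    have key : ∀ k, (∫⁻ θ in Set.Ioc (0:ℝ) (2*π), ‖f k θ‖₊ ∂volume) ≤ ENNReal.ofReal (M k) := by
      intro k
      have step1 : (∫⁻ θ in Set.Ioc (0:ℝ) (2*π), ‖f k θ‖₊ ∂volume)
          ≤ ∫⁻ _ in Set.Ioc (0:ℝ) (2*π), ENNReal.ofReal (|x|^(2*k)/(Nat.factorial (2*k):ℝ)) ∂volume := by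
        apply lintegral_mono; intro θ
        show (↑‖f k θ‖₊ : ENNReal) ≤ _
        rw [← enorm_eq_nnnorm, ← ofReal_norm]; exact ENNReal.ofReal_le_ofReal (hnorm k θ)
      refine step1.trans ?_
      rw [setLIntegral_const, Real.volume_Ioc, ← ENNReal.ofReal_mul (by positivity), sub_zero]
    exact ne_top_of_le_ne_top ENNReal.ofReal_ne_top
      ((ENNReal.tsum_le_tsum key).trans (le_of_eq (ENNReal.ofReal_tsum_of_nonneg hMnn hMs).symm))
  have hmeas : ∀ k, AEStronglyMeasurable (f k) (volume.restrict (Set.Ioc (0:ℝ) (2*π))) :=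
    fun k => (hcont k).aestronglyMeasurable
  have hcongr : (∫ θ in Set.Ioc (0:ℝ) (2*π), Real.cos (x * Real.cos θ))
      = ∫ θ in Set.Ioc (0:ℝ) (2*π), ∑' k, f k θ := by
    simp_rw [hpt]
  rw [hcongr, MeasureTheory.integral_tsum hmeas hbound]
  have hval : ∀ k, (∫ θ in Set.Ioc (0:ℝ) (2*π), f k θ)
      = 2*π * ((-1:ℝ)^k / (Nat.factorial k:ℝ)^2 * (x/2)^(2*k)) := by
    intro k
    rw [← intervalIntegral.integral_of_le h2pi]
    have heq : ∀ θ, f k θ = ((-1:ℝ)^k * x^(2*k) / (Nat.factorial (2*k):ℝ)) * Real.cos θ^(2*k) := by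
      intro θ; rw [hf]; simp only [mul_pow]; ring
    simp_rw [heq]
    rw [intervalIntegral.integral_const_mul, integral_cos_pow_two_pi]
    have h4 : ((x:ℝ)/2)^(2*k) = x^(2*k) / 4^k := by
      rw [div_pow]; congr 1; rw [pow_mul]; norm_num
    have hfk : (Nat.factorial (2*k) : ℝ) ≠ 0 := Nat.cast_ne_zero.mpr (Nat.factorial_ne_zero _)
    have hk : (Nat.factorial k : ℝ) ≠ 0 := Nat.cast_ne_zero.mpr (Nat.factorial_ne_zero _)
    rw [h4]
    field_simp
  simp_rw [hval]
  rw [tsum_mul_left]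
  rfl


lemma two_pi_pos' : (0:ℝ) < 2*π := by positivity

lemma J0_rep' (x : ℝ) :
    (∫ θ in (0:ℝ)..(2*π), Real.cos (x * Real.cos θ)) = 2*π * J0 x := by
  rw [intervalIntegral.integral_of_le two_pi_pos'.le, J0_rep]

/-- periodicity of θ ↦ cos (c * cos θ) -/
lemma periodic_aux (c : ℝ) : Function.Periodic (fun θ => Real.cos (c * Real.cos θ)) (2*π) := by
  simpa [Function.comp] using Real.cos_periodic.comp (fun t => Real.cos (c * t))

/-- shifted integral identity -/
lemma J0_rep_shift (c s : ℝ) :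
    (∫ θ in (0:ℝ)..(2*π), Real.cos (c * Real.cos (θ + s))) = 2*π * J0 c := by
  have h := intervalIntegral.integral_comp_add_right (a := (0:ℝ)) (b := 2*π)
    (fun θ => Real.cos (c * Real.cos θ)) s
  rw [h, zero_add]
  have hper := (periodic_aux c).intervalIntegral_add_eq s 0
  rw [(by ring : s + 2*π = 2*π + s)] at hper
  rw [hper, zero_add, J0_rep']

lemma J0_rep_sin (c : ℝ) :
    (∫ θ in (0:ℝ)..(2*π), Real.cos (c * Real.sin θ)) = 2*π * J0 c := by
  have := J0_rep_shift c (- (π/2))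
  rw [← this]
  refine intervalIntegral.integral_congr fun θ _ => ?_
  rw [(by ring : θ + -(π/2) = θ - π/2), Real.cos_sub_pi_div_two]

lemma J0_rep_prod (y : ℝ) :
    (∫ θ in (0:ℝ)..(2*π), Real.cos (y * Real.cos θ) * Real.cos (y * Real.sin θ))
      = 2*π * J0 (Real.sqrt 2 * y) := by
  have sqrt2 : Real.sqrt 2 * Real.sqrt 2 = 2 := Real.mul_self_sqrt (by norm_num)
  have hpt : ∀ θ, Real.cos (y * Real.cos θ) * Real.cos (y * Real.sin θ)
      = (Real.cos ((Real.sqrt 2 * y) * Real.cos (θ + (-(π/4))))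
        + Real.cos ((Real.sqrt 2 * y) * Real.cos (θ + π/4))) / 2 := by
    intro θ
    have h1 : (Real.sqrt 2 * y) * Real.cos (θ + (-(π/4))) = y * Real.cos θ + y * Real.sin θ := by
      rw [(by ring : θ + -(π/4) = θ - π/4), Real.cos_sub, Real.cos_pi_div_four,
        Real.sin_pi_div_four,
        show Real.sqrt 2 * y * (Real.cos θ * (Real.sqrt 2/2) + Real.sin θ * (Real.sqrt 2/2))
          = (Real.sqrt 2 * Real.sqrt 2) * (y * (Real.cos θ + Real.sin θ))/2 by ring, sqrt2]
      ring
    have h2 : (Real.sqrt 2 * y) * Real.cos (θ + π/4) = y * Real.cos θ - y * Real.sin θ := by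
      rw [Real.cos_add, Real.cos_pi_div_four, Real.sin_pi_div_four,
        show Real.sqrt 2 * y * (Real.cos θ * (Real.sqrt 2/2) - Real.sin θ * (Real.sqrt 2/2))
          = (Real.sqrt 2 * Real.sqrt 2) * (y * (Real.cos θ - Real.sin θ))/2 by ring, sqrt2]
      ring
    rw [h1, h2, Real.cos_add, Real.cos_sub]
    ring
  rw [intervalIntegral.integral_congr (fun θ _ => hpt θ)]
  have c1 : Continuous fun θ => Real.cos ((Real.sqrt 2 * y) * Real.cos (θ + (-(π/4)))) := by
    fun_prop
  have c2 : Continuous fun θ => Real.cos ((Real.sqrt 2 * y) * Real.cos (θ + π/4)) := by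
    fun_prop
  rw [intervalIntegral.integral_div, intervalIntegral.integral_add
    (c1.intervalIntegrable _ _) (c2.intervalIntegrable _ _),
    J0_rep_shift, J0_rep_shift]
  ring

noncomputable def Gf (y : ℝ) : ℝ := J0 (Real.sqrt 2 * y) - 2 * J0 y + 1

lemma Gf_rep (y : ℝ) : Gf y = (2*π)⁻¹ *
    ∫ θ in (0:ℝ)..(2*π), (1 - Real.cos (y * Real.cos θ)) * (1 - Real.cos (y * Real.sin θ)) := by
  have cA : Continuous fun θ => Real.cos (y * Real.cos θ) := by fun_prop
  have cB : Continuous fun θ => Real.cos (y * Real.sin θ) := by fun_prop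
  have e1 : (∫ θ in (0:ℝ)..(2*π), (1 - Real.cos (y * Real.cos θ)) * (1 - Real.cos (y * Real.sin θ)))
      = ∫ θ in (0:ℝ)..(2*π), ((1 - Real.cos (y * Real.cos θ))
        - (Real.cos (y * Real.sin θ) - Real.cos (y * Real.cos θ) * Real.cos (y * Real.sin θ))) := by
    refine intervalIntegral.integral_congr fun θ _ => ?_
    ring
  rw [e1, intervalIntegral.integral_sub ((by fun_prop : Continuous fun θ : ℝ =>
      (1 - Real.cos (y * Real.cos θ))).intervalIntegrable _ _)
    ((by fun_prop : Continuous fun θ : ℝ => Real.cos (y * Real.sin θ) - Real.cos (y * Real.cos θ) * Real.cos (y * Real.sin θ)).intervalIntegrable _ _),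
    intervalIntegral.integral_sub (continuous_const.intervalIntegrable _ _) (cA.intervalIntegrable _ _),
    intervalIntegral.integral_sub (cB.intervalIntegrable _ _) ((by fun_prop : Continuous fun θ : ℝ => Real.cos (y * Real.cos θ) * Real.cos (y * Real.sin θ)).intervalIntegrable _ _),
    intervalIntegral.integral_const, J0_rep', J0_rep_sin, J0_rep_prod]
  have hπ : π ≠ 0 := Real.pi_ne_zero
  rw [Gf]
  field_simp
  ring

lemma one_sub_cos_le (t : ℝ) : 1 - Real.cos t ≤ t^2/2 := by
  have h1 : Real.cos t = 2 * Real.cos (t/2)^2 - 1 := by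
    rw [← Real.cos_two_mul, (by ring : 2*(t/2) = t)]
  nlinarith [Real.sin_sq_add_cos_sq (t/2), Real.sin_sq_le_sq (x := t/2)]

lemma one_sub_cos_nonneg (t : ℝ) : 0 ≤ 1 - Real.cos t := by
  nlinarith [Real.cos_le_one t]

lemma one_sub_cos_pos {t : ℝ} (h0 : 0 < t) (hπ : t ≤ π) : 0 < 1 - Real.cos t := by
  have h1 : Real.cos t = 2 * Real.cos (t/2)^2 - 1 := by
    rw [← Real.cos_two_mul, (by ring : 2*(t/2) = t)]
  have hs : 0 < Real.sin (t/2) := Real.sin_pos_of_pos_of_lt_pi (by linarith)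
    (by nlinarith [Real.pi_pos])
  nlinarith [Real.sin_sq_add_cos_sq (t/2)]

lemma Gf_nonneg (y : ℝ) : 0 ≤ Gf y := by
  rw [Gf_rep]
  refine mul_nonneg (by positivity) (intervalIntegral.integral_nonneg two_pi_pos'.le
    fun θ _ => mul_nonneg (one_sub_cos_nonneg _) (one_sub_cos_nonneg _))

lemma Gf_le_sq (y : ℝ) : Gf y ≤ y^4/4 := by
  rw [Gf_rep]
  have key : ∀ θ : ℝ, (1 - Real.cos (y * Real.cos θ)) * (1 - Real.cos (y * Real.sin θ)) ≤ y^4/4 := by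
    intro θ
    have hA := one_sub_cos_le (y * Real.cos θ)
    have hB := one_sub_cos_le (y * Real.sin θ)
    have hA0 := one_sub_cos_nonneg (y * Real.cos θ)
    have hB0 := one_sub_cos_nonneg (y * Real.sin θ)
    have h1 : (1 - Real.cos (y * Real.cos θ)) * (1 - Real.cos (y * Real.sin θ))
        ≤ ((y * Real.cos θ)^2/2) * ((y * Real.sin θ)^2/2) := by
      apply mul_le_mul hA hB hB0 (by positivity)
    refine h1.trans ?_
    have hc : (y * Real.cos θ)^2 ≤ y^2 := by
      rw [mul_pow]; nlinarith [Real.cos_sq_le_one θ, sq_nonneg y]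
    have hs : (y * Real.sin θ)^2 ≤ y^2 := by
      rw [mul_pow]; nlinarith [Real.sin_sq_le_one θ, sq_nonneg y]
    nlinarith [sq_nonneg (y * Real.sin θ), sq_nonneg (y * Real.cos θ), sq_nonneg y]
  calc (2*π)⁻¹ * ∫ θ in (0:ℝ)..(2*π), (1 - Real.cos (y * Real.cos θ)) * (1 - Real.cos (y * Real.sin θ))
      ≤ (2*π)⁻¹ * ∫ _ in (0:ℝ)..(2*π), y^4/4 := by
        refine mul_le_mul_of_nonneg_left ?_ (by positivity)
        refine intervalIntegral.integral_mono_on two_pi_pos'.le ?_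
          (continuous_const.intervalIntegrable _ _) (fun θ _ => key θ)
        exact (by fun_prop : Continuous fun θ : ℝ => (1 - Real.cos (y * Real.cos θ))
          * (1 - Real.cos (y * Real.sin θ))).intervalIntegrable _ _
    _ = y^4/4 := by
        rw [intervalIntegral.integral_const, smul_eq_mul, sub_zero]
        field_simp

lemma Gf_le_four (y : ℝ) : Gf y ≤ 4 := by
  rw [Gf_rep]
  have key : ∀ θ : ℝ, (1 - Real.cos (y * Real.cos θ)) * (1 - Real.cos (y * Real.sin θ)) ≤ 4 := by
    intro θ
    have h1 : 1 - Real.cos (y * Real.cos θ) ≤ 2 := by nlinarith [Real.neg_one_le_cos (y * Real.cos θ)]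
    have h2 : 1 - Real.cos (y * Real.sin θ) ≤ 2 := by nlinarith [Real.neg_one_le_cos (y * Real.sin θ)]
    nlinarith [one_sub_cos_nonneg (y * Real.cos θ), one_sub_cos_nonneg (y * Real.sin θ)]
  calc (2*π)⁻¹ * ∫ θ in (0:ℝ)..(2*π), (1 - Real.cos (y * Real.cos θ)) * (1 - Real.cos (y * Real.sin θ))
      ≤ (2*π)⁻¹ * ∫ _ in (0:ℝ)..(2*π), (4:ℝ) := by
        refine mul_le_mul_of_nonneg_left ?_ (by positivity)
        refine intervalIntegral.integral_mono_on two_pi_pos'.le ?_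
          (continuous_const.intervalIntegrable _ _) (fun θ _ => key θ)
        exact (by fun_prop : Continuous fun θ : ℝ => (1 - Real.cos (y * Real.cos θ))
          * (1 - Real.cos (y * Real.sin θ))).intervalIntegrable _ _
    _ = 4 := by
        rw [intervalIntegral.integral_const, smul_eq_mul, sub_zero]
        field_simp

lemma Gf_pos {y : ℝ} (h0 : 0 < y) (hy : y ≤ π) : 0 < Gf y := by
  rw [Gf_rep]
  have hc : Continuous fun θ : ℝ => (1 - Real.cos (y * Real.cos θ)) * (1 - Real.cos (y * Real.sin θ)) := by
    fun_prop
  refine mul_pos (by positivity) ?_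
  have hsplit : (∫ θ in (0:ℝ)..(2*π), (1 - Real.cos (y * Real.cos θ)) * (1 - Real.cos (y * Real.sin θ)))
      = (∫ θ in (0:ℝ)..(π/2), (1 - Real.cos (y * Real.cos θ)) * (1 - Real.cos (y * Real.sin θ)))
      + ∫ θ in (π/2)..(2*π), (1 - Real.cos (y * Real.cos θ)) * (1 - Real.cos (y * Real.sin θ)) := by
    rw [intervalIntegral.integral_add_adjacent_intervals (hc.intervalIntegrable _ _)
      (hc.intervalIntegrable _ _)]
  rw [hsplit]
  have hπ := Real.pi_pos
  have h1 : 0 < ∫ θ in (0:ℝ)..(π/2), (1 - Real.cos (y * Real.cos θ)) * (1 - Real.cos (y * Real.sin θ)) := by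
    refine intervalIntegral.intervalIntegral_pos_of_pos_on (hc.intervalIntegrable _ _) ?_ (by linarith)
    intro θ hθ
    obtain ⟨hθ0, hθ1⟩ := hθ
    have hcos : 0 < Real.cos θ := Real.cos_pos_of_mem_Ioo ⟨by linarith, by linarith⟩
    have hsin : 0 < Real.sin θ := Real.sin_pos_of_pos_of_lt_pi hθ0 (by linarith)
    have hcos1 : Real.cos θ ≤ 1 := Real.cos_le_one θ
    have hsin1 : Real.sin θ ≤ 1 := Real.sin_le_one θ
    refine mul_pos (one_sub_cos_pos (by positivity) ?_) (one_sub_cos_pos (by positivity) ?_)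
    · nlinarith
    · nlinarith
  have h2 : 0 ≤ ∫ θ in (π/2)..(2*π), (1 - Real.cos (y * Real.cos θ)) * (1 - Real.cos (y * Real.sin θ)) :=
    intervalIntegral.integral_nonneg (by linarith)
      (fun θ _ => mul_nonneg (one_sub_cos_nonneg _) (one_sub_cos_nonneg _))
  linarith

lemma continuous_J0 : Continuous J0 := by
  have hrep : J0 = fun x => (2*π)⁻¹ * ∫ θ in Set.Ioc (0:ℝ) (2*π), Real.cos (x * Real.cos θ) := by
    funext x
    rw [J0_rep x]
    have : π ≠ 0 := Real.pi_ne_zero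
    field_simp
  rw [hrep]
  refine continuous_const.mul ?_
  refine MeasureTheory.continuous_of_dominated (bound := fun _ => (1:ℝ))
    (fun x => (by fun_prop : Continuous fun θ => Real.cos (x * Real.cos θ)).aestronglyMeasurable)
    (fun x => Filter.Eventually.of_forall fun θ => by
      rw [Real.norm_eq_abs]; exact Real.abs_cos_le_one _)
    (MeasureTheory.integrableOn_const (by rw [Real.volume_Ioc]; exact ENNReal.ofReal_ne_top))
    (Filter.Eventually.of_forall fun θ => by fun_prop)


lemma continuous_Gf : Continuous Gf := by
  unfold Gf
  exact ((continuous_J0.comp (continuous_const.mul continuous_id)).sub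
    (continuous_const.mul continuous_J0)).add continuous_const

lemma expfun_strictAnti : StrictAntiOn (fun s : ℝ => (1 - Real.exp (-s))/s) (Set.Ioi 0) := by
  have hderiv : ∀ x ∈ interior (Set.Ioi (0:ℝ)),
      HasDerivAt (fun s : ℝ => (1 - Real.exp (-s))/s)
        ((Real.exp (-x) * x - (1 - Real.exp (-x)) * 1)/x^2) x := by
    intro x hx
    rw [interior_Ioi] at hx
    have h0 : HasDerivAt (fun s : ℝ => Real.exp (-s)) (Real.exp (-x) * (-1)) x :=
      ((hasDerivAt_id x).neg).exp
    have h1 : HasDerivAt (fun s : ℝ => 1 - Real.exp (-s)) (Real.exp (-x)) x := by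
      simpa using h0.const_sub 1
    exact h1.div (hasDerivAt_id x) (ne_of_gt hx)
  refine strictAntiOn_of_deriv_neg (convex_Ioi 0) ?_ ?_
  · refine ContinuousOn.div ?_ continuousOn_id (fun x hx => ne_of_gt hx)
    fun_prop
  · intro x hx
    rw [((hderiv x hx).deriv :)]
    rw [interior_Ioi] at hx
    have hlt := Real.add_one_lt_exp (x := x) (ne_of_gt hx)
    have hmul : Real.exp (-x) * Real.exp x = 1 := by
      rw [← Real.exp_add]; simp
    have hnum : Real.exp (-x) * x - (1 - Real.exp (-x)) * 1 < 0 := by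
      nlinarith [Real.exp_pos (-x)]
    have hx2 : (0:ℝ) < x^2 := pow_pos hx 2
    exact div_neg_of_neg_of_pos hnum hx2

lemma Ffun_lt {a b u : ℝ} (ha : 0 < a) (hab : a < b) (hu : 0 < u) :
    (1 - Real.exp (-(b*u^2)))/b < (1 - Real.exp (-(a*u^2)))/a := by
  have hu2 : 0 < u^2 := by positivity
  have h := expfun_strictAnti (Set.mem_Ioi.mpr (mul_pos ha (pow_pos hu 2)))
    (Set.mem_Ioi.mpr (mul_pos (ha.trans hab) (pow_pos hu 2)))
    (by nlinarith : a*u^2 < b*u^2)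
  -- h : (1 - exp (-(b*u^2)))/(b*u^2) < (1 - exp (-(a*u^2)))/(a*u^2)
  have ha' : a ≠ 0 := ne_of_gt ha
  have hb' : b ≠ 0 := ne_of_gt (ha.trans hab)
  calc (1 - Real.exp (-(b*u^2)))/b = u^2 * ((1 - Real.exp (-(b*u^2)))/(b*u^2)) := by
        field_simp
    _ < u^2 * ((1 - Real.exp (-(a*u^2)))/(a*u^2)) := by
        exact mul_lt_mul_of_pos_left h hu2
    _ = (1 - Real.exp (-(a*u^2)))/a := by field_simp


lemma phi_eq (α r θ : ℝ) (hθ : 0 < θ) :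
    phiRA r α θ = 2/π * ∫ u in Set.Ioi (0:ℝ),
      ((1 - Real.exp (-(θ*u^2)))/θ) * ((u ^ (1+2*α) : ℝ)⁻¹ * Gf (r*u)) := by
  have hc : 0 < Real.sqrt θ := Real.sqrt_pos.mpr hθ
  set f : ℝ → ℝ := fun x => (1 - Real.exp (-x ^ 2)) / x ^ (1 + 2 * α) *
        (J0 (Real.sqrt 2 * r * x / Real.sqrt θ) - 2 * J0 (r * x / Real.sqrt θ) + 1) with hfdef
  have key := MeasureTheory.integral_comp_mul_left_Ioi f 0 hc
  rw [mul_zero] at key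
  have heq : Set.EqOn (fun u => f (Real.sqrt θ * u))
      (fun u => (Real.sqrt θ ^ (1+2*α) : ℝ)⁻¹ *
        ((1 - Real.exp (-(θ*u^2))) * ((u ^ (1+2*α) : ℝ)⁻¹ * Gf (r*u)))) (Set.Ioi 0) := by
    intro u hu
    have hu' : (0:ℝ) < u := hu
    simp only [hfdef]
    have h1 : (Real.sqrt θ * u)^2 = θ * u^2 := by
      rw [mul_pow, Real.sq_sqrt hθ.le]
    have h2 : Real.sqrt 2 * r * (Real.sqrt θ * u) / Real.sqrt θ = Real.sqrt 2 * (r * u) := by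
      field_simp
    have h3 : r * (Real.sqrt θ * u) / Real.sqrt θ = r * u := by field_simp
    have h4 : (Real.sqrt θ * u) ^ (1+2*α) = Real.sqrt θ ^ (1+2*α) * u ^ (1+2*α) :=
      Real.mul_rpow hc.le hu'.le
    rw [h1, h2, h3, h4, Gf]
    have h5 : (Real.sqrt θ ^ (1+2*α) : ℝ) ≠ 0 := ne_of_gt (Real.rpow_pos_of_pos hc _)
    have h6 : (u ^ (1+2*α) : ℝ) ≠ 0 := ne_of_gt (Real.rpow_pos_of_pos hu' _)
    field_simp
  have hint : (∫ u in Set.Ioi (0:ℝ), f (Real.sqrt θ * u))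
      = (Real.sqrt θ ^ (1+2*α) : ℝ)⁻¹ *
        ∫ u in Set.Ioi (0:ℝ), (1 - Real.exp (-(θ*u^2))) * ((u ^ (1+2*α) : ℝ)⁻¹ * Gf (r*u)) := by
    rw [MeasureTheory.setIntegral_congr_fun measurableSet_Ioi heq,
      MeasureTheory.integral_const_mul]
  have hIoi : (∫ x in Set.Ioi (0:ℝ), f x)
      = Real.sqrt θ * ((Real.sqrt θ ^ (1+2*α) : ℝ)⁻¹ *
        ∫ u in Set.Ioi (0:ℝ), (1 - Real.exp (-(θ*u^2))) * ((u ^ (1+2*α) : ℝ)⁻¹ * Gf (r*u))) := by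
    rw [← hint, key, smul_eq_mul, ← mul_assoc, mul_inv_cancel₀ (ne_of_gt hc), one_mul]
  have hrhs : (∫ u in Set.Ioi (0:ℝ),
        ((1 - Real.exp (-(θ*u^2)))/θ) * ((u ^ (1+2*α) : ℝ)⁻¹ * Gf (r*u)))
      = θ⁻¹ * ∫ u in Set.Ioi (0:ℝ), (1 - Real.exp (-(θ*u^2))) * ((u ^ (1+2*α) : ℝ)⁻¹ * Gf (r*u)) := by
    rw [← MeasureTheory.integral_const_mul]
    refine MeasureTheory.setIntegral_congr_fun measurableSet_Ioi (fun u _ => ?_)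
    ring
  rw [phiRA, hIoi, hrhs]
  have hconst : 2 / (θ ^ (1 - α) * π) * Real.sqrt θ * (Real.sqrt θ ^ (1+2*α) : ℝ)⁻¹
      = 2/π * θ⁻¹ := by
    have hs : Real.sqrt θ = θ ^ ((1:ℝ)/2) := Real.sqrt_eq_rpow θ
    have h7 : (Real.sqrt θ ^ (1+2*α) : ℝ) = θ ^ (((1:ℝ)/2) * (1+2*α)) := by
      rw [hs, ← Real.rpow_mul hθ.le]
    rw [h7, hs, ← Real.rpow_neg hθ.le]
    rw [mul_assoc, ← Real.rpow_add hθ, show (1:ℝ)/2 + -(1/2*(1+2*α)) = -α by ring]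
    have h8 : θ ^ (1-α) = θ * θ ^ (-α) := by
      rw [show (1-α) = 1 + (-α) by ring, Real.rpow_add hθ, Real.rpow_one]
    rw [h8]
    have h9 : θ ^ (-α) ≠ 0 := ne_of_gt (Real.rpow_pos_of_pos hθ _)
    have hπ : π ≠ 0 := Real.pi_ne_zero
    field_simp
  linear_combination (∫ u in Set.Ioi (0:ℝ),
    (1 - Real.exp (-(θ*u^2))) * ((u ^ (1+2*α) : ℝ)⁻¹ * Gf (r*u))) * hconst


lemma one_sub_exp_nonneg {s u : ℝ} (hs : 0 < s) : 0 ≤ 1 - Real.exp (-(s*u^2)) := by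
  have : Real.exp (-(s*u^2)) ≤ Real.exp 0 := Real.exp_le_exp.mpr (by nlinarith [sq_nonneg u])
  rw [Real.exp_zero] at this
  linarith

lemma rpow_combine {u : ℝ} (hu : 0 < u) (α : ℝ) :
    u^2 * ((u ^ (1+2*α) : ℝ)⁻¹ * u^4) = u ^ ((5:ℝ)-2*α) := by
  rw [← Real.rpow_natCast u 2, ← Real.rpow_natCast u 4, ← Real.rpow_neg hu.le,
    ← Real.rpow_add hu, ← Real.rpow_add hu]
  norm_num
  ring_nf

lemma g_nonneg {α r s : ℝ} (hs : 0 < s) {u : ℝ} (hu : 0 < u) :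
    0 ≤ ((1 - Real.exp (-(s*u^2)))/s) * ((u ^ (1+2*α) : ℝ)⁻¹ * Gf (r*u)) := by
  apply mul_nonneg (div_nonneg (one_sub_exp_nonneg hs) hs.le)
  exact mul_nonneg (inv_nonneg.mpr (Real.rpow_nonneg hu.le _)) (Gf_nonneg _)

lemma integrable_g (α r : ℝ) (hα : 0 < α) (hα3 : α < 3) (hr : 0 < r) {s : ℝ} (hs : 0 < s) :
    IntegrableOn (fun u => ((1 - Real.exp (-(s*u^2)))/s) * ((u ^ (1+2*α) : ℝ)⁻¹ * Gf (r*u)))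
      (Set.Ioi (0:ℝ)) := by
  set g : ℝ → ℝ := fun u => ((1 - Real.exp (-(s*u^2)))/s) * ((u ^ (1+2*α) : ℝ)⁻¹ * Gf (r*u))
    with hg
  have hA_le_sq : ∀ u : ℝ, (1 - Real.exp (-(s*u^2)))/s ≤ u^2 := by
    intro u
    rw [div_le_iff₀ hs]
    have := Real.add_one_le_exp (-(s*u^2))
    nlinarith
  have hA_le_inv : ∀ u : ℝ, (1 - Real.exp (-(s*u^2)))/s ≤ 1/s := by
    intro u
    gcongr
    have := Real.exp_nonneg (-(s*u^2)); linarith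
  have hcontOn : ContinuousOn g (Set.Ioi (0:ℝ)) := by
    apply ContinuousOn.mul
    · exact ((continuous_const.sub (Real.continuous_exp.comp (continuous_const.mul (continuous_pow 2)).neg)).div_const
        s).continuousOn
    · apply ContinuousOn.mul
      · exact ContinuousOn.inv₀
          (ContinuousOn.rpow_const continuousOn_id (fun x hx => Or.inl (ne_of_gt hx)))
          (fun x hx => ne_of_gt (Real.rpow_pos_of_pos hx _))
      · exact (continuous_Gf.comp (continuous_const.mul continuous_id)).continuousOn
  rw [← Set.Ioc_union_Ioi_eq_Ioi (zero_le_one (α := ℝ))]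
  apply MeasureTheory.IntegrableOn.union
  · -- on Ioc 0 1
    have hbint : IntegrableOn (fun u : ℝ => r^4/4 * u ^ ((5:ℝ)-2*α)) (Set.Ioc (0:ℝ) 1) := by
      have hi : IntervalIntegrable (fun u : ℝ => u ^ ((5:ℝ)-2*α)) volume 0 1 :=
        intervalIntegral.intervalIntegrable_rpow' (by linarith)
      rw [intervalIntegrable_iff_integrableOn_Ioc_of_le zero_le_one] at hi
      exact hi.const_mul _
    refine hbint.mono' ((hcontOn.mono Set.Ioc_subset_Ioi_self).aestronglyMeasurable
      measurableSet_Ioc) ?_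
    refine (ae_restrict_iff' measurableSet_Ioc).2 (Filter.Eventually.of_forall fun u hu => ?_)
    have hu0 : (0:ℝ) < u := hu.1
    have hBnn : (0:ℝ) ≤ (u ^ (1+2*α) : ℝ)⁻¹ := inv_nonneg.mpr (Real.rpow_nonneg hu0.le _)
    rw [Real.norm_eq_abs, abs_of_nonneg (g_nonneg hs hu0)]
    have step1 : g u ≤ u^2 * ((u ^ (1+2*α) : ℝ)⁻¹ * (r^4*u^4/4)) := by
      apply mul_le_mul (hA_le_sq u) ?_ ?_ (sq_nonneg u)
      · apply mul_le_mul_of_nonneg_left ?_ hBnn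
        calc Gf (r*u) ≤ (r*u)^4/4 := Gf_le_sq _
          _ = r^4*u^4/4 := by ring
      · exact mul_nonneg hBnn (Gf_nonneg _)
    refine step1.trans ?_
    have : u^2 * ((u ^ (1+2*α) : ℝ)⁻¹ * (r^4*u^4/4)) = r^4/4 * (u^2 * ((u ^ (1+2*α) : ℝ)⁻¹ * u^4)) := by
      ring
    rw [this, rpow_combine hu0]
  · -- on Ioi 1
    have hbint : IntegrableOn (fun u : ℝ => 4/s * u ^ (-(1+2*α))) (Set.Ioi (1:ℝ)) :=
      (integrableOn_Ioi_rpow_of_lt (by linarith) one_pos).const_mul _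
    refine hbint.mono' ((hcontOn.mono (fun x (hx : (1:ℝ) < x) => (lt_trans one_pos hx : (0:ℝ) < x))).aestronglyMeasurable
      measurableSet_Ioi) ?_
    refine (ae_restrict_iff' measurableSet_Ioi).2 (Filter.Eventually.of_forall fun u hu => ?_)
    have hu0 : (0:ℝ) < u := lt_trans one_pos hu
    have hBnn : (0:ℝ) ≤ (u ^ (1+2*α) : ℝ)⁻¹ := inv_nonneg.mpr (Real.rpow_nonneg hu0.le _)
    rw [Real.norm_eq_abs, abs_of_nonneg (g_nonneg hs hu0)]
    have step1 : g u ≤ (1/s) * ((u ^ (1+2*α) : ℝ)⁻¹ * 4) := by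
      apply mul_le_mul (hA_le_inv u) ?_ ?_ (by positivity)
      · exact mul_le_mul_of_nonneg_left (Gf_le_four _) hBnn
      · exact mul_nonneg hBnn (Gf_nonneg _)
    refine step1.trans ?_
    rw [← Real.rpow_neg hu0.le]
    ring_nf
    exact le_refl _

theorem statement8 (α : ℝ) (hα : 0 < α) (hα3 : α < 3) (r : ℝ) (hr : 0 < r) :
    StrictAntiOn (fun θ2 => phiRA r α θ2) (Set.Ioi (0 : ℝ)) := by
  intro a ha b hb hab
  rw [Set.mem_Ioi] at ha hb
  simp only
  rw [phi_eq α r a ha, phi_eq α r b hb]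
  have h2π : (0:ℝ) < 2/π := by positivity
  apply mul_lt_mul_of_pos_left ?_ h2π
  set ga : ℝ → ℝ := fun u => ((1 - Real.exp (-(a*u^2)))/a) * ((u ^ (1+2*α) : ℝ)⁻¹ * Gf (r*u))
    with hga
  set gb : ℝ → ℝ := fun u => ((1 - Real.exp (-(b*u^2)))/b) * ((u ^ (1+2*α) : ℝ)⁻¹ * Gf (r*u))
    with hgb
  have inta : IntegrableOn ga (Set.Ioi (0:ℝ)) := integrable_g α r hα hα3 hr ha
  have intb : IntegrableOn gb (Set.Ioi (0:ℝ)) := integrable_g α r hα hα3 hr hb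
  have hdiff : ∀ u : ℝ, 0 < u → gb u ≤ ga u := by
    intro u hu
    apply mul_le_mul_of_nonneg_right (Ffun_lt ha hab hu).le
    exact mul_nonneg (inv_nonneg.mpr (Real.rpow_nonneg hu.le _)) (Gf_nonneg _)
  have hpos : 0 < ∫ u in Set.Ioi (0:ℝ), (ga u - gb u) := by
    refine (MeasureTheory.setIntegral_pos_iff_support_of_nonneg_ae
      (f := fun u => ga u - gb u) ?_ (inta.sub intb)).mpr ?_
    case _ =>
      exact (ae_restrict_iff' measurableSet_Ioi).2 (Filter.Eventually.of_forall
        fun u hu => sub_nonneg.2 (hdiff u hu))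
    · refine lt_of_lt_of_le ?_ (measure_mono (?_ :
        Set.Ioo 0 (π/r) ⊆ (Function.support fun u => ga u - gb u) ∩ Set.Ioi 0))
      · rw [Real.volume_Ioo, sub_zero]
        exact ENNReal.ofReal_pos.mpr (by positivity)
      · intro u hu
        obtain ⟨hu0, hu1⟩ := hu
        refine ⟨?_, hu0⟩
        have hw : 0 < (u ^ (1+2*α) : ℝ)⁻¹ * Gf (r*u) := by
          apply mul_pos (inv_pos.mpr (Real.rpow_pos_of_pos hu0 _))
          exact Gf_pos (by positivity) (by rw [mul_comm]; exact ((lt_div_iff₀ hr).mp hu1).le)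
        have : gb u < ga u := mul_lt_mul_of_pos_right (Ffun_lt ha hab hu0) hw
        exact Function.mem_support.mpr (sub_ne_zero.mpr (ne_of_gt this))
  rw [MeasureTheory.integral_sub inta intb] at hpos
  linarith
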